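/- There exists a constant K > 0 such that for every s ∈ ℕ and every root y₀ of He_{s+1}, the Lagrange basis polynomial L_{s;y₀} satisfies sup_{y∈ℝ} |L_{s;y₀}(y)| · √(g(y)) ≤ e^{K s}, where g(y) = (2π)^{-1/2} e^{-y²/2}. -/

import Mathlib

open Polynomial Filter Topology

noncomputable def hf (n : ℕ) (x : ℝ) : ℝ := Polynomial.aeval x (Polynomial.hermite n)
noncomputable def hP (n : ℕ) : Polynomial ℝ := (hermite n).map (Int.castRingHom ℝ)
noncomputable def rset (n : ℕ) : Finset ℝ := (hP n).roots.toFinset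

lemma derivative_hermite_succ (n : ℕ) :
    Polynomial.derivative (hermite (n+1)) = C ((n : ℤ)+1) * hermite n := by
  induction n with
  | zero => simp [hermite_one, hermite_zero]
  | succ n ih =>
    rw [hermite_succ (n+1), derivative_sub, derivative_mul, derivative_X, one_mul, ih,
      derivative_mul, derivative_C, zero_mul, zero_add, hermite_succ n,
      show ((n+1 : ℕ) : ℤ) + 1 = ((n:ℤ)+1) + 1 by push_cast; ring]
    simp only [C_add, C_1]
    ring

lemma hf_zero (x : ℝ) : hf 0 x = 1 := by simp [hf, hermite_zero]
lemma hf_one (x : ℝ) : hf 1 x = x := by simp [hf, hermite_one]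

lemma hf_succ_succ (n : ℕ) (x : ℝ) :
    hf (n+2) x = x * hf (n+1) x - (n+1 : ℝ) * hf n x := by
  simp only [hf, hermite_succ (n+1), derivative_hermite_succ, map_sub, map_mul, aeval_X, aeval_C]
  push_cast; ring

lemma hf_eval (n : ℕ) (x : ℝ) :
    ((hermite n).map (Int.castRingHom ℝ)).eval x = hf n x := by
  rw [eval_map, hf, aeval_def]; rfl

lemma hf_parity (n : ℕ) (x : ℝ) : hf n (-x) = (-1)^n * hf n x := by
  induction n using Nat.strong_induction_on with
  | _ n ih =>
    match n with
    | 0 => simp [hf_zero]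
    | 1 => simp [hf_one]
    | (m+2) =>
      rw [hf_succ_succ, hf_succ_succ, ih (m+1) (by omega), ih m (by omega)]
      ring

lemma hf_pos (n : ℕ) (x : ℝ) (hx : 2 * Real.sqrt (n+1) ≤ x) :
    x/2 * hf n x ≤ hf (n+1) x ∧ 0 < hf n x := by
  induction n with
  | zero =>
    have h2 : (2:ℝ) ≤ x := by simpa using hx
    rw [hf_zero, hf_one]
    constructor <;> nlinarith
  | succ n ih =>
    have hsn : Real.sqrt ((n:ℝ)+1) ≤ Real.sqrt ((n:ℝ)+1+1) := by
      apply Real.sqrt_le_sqrt; linarith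
    push_cast at hx
    have hx' : 2 * Real.sqrt ((n:ℝ)+1) ≤ x := by push_cast; linarith
    obtain ⟨ih1, ih2⟩ := ih hx'
    have hx0 : 0 < x := by
      nlinarith [Real.sq_sqrt (show (0:ℝ) ≤ (n:ℝ)+1+1 by positivity),
        Real.sqrt_nonneg ((n:ℝ)+1+1)]
    have hsq : 4 * ((n:ℝ)+2) ≤ x^2 := by
      have h1 : (2 * Real.sqrt ((n:ℝ)+1+1))^2 ≤ x^2 :=
        pow_le_pow_left₀ (by positivity) hx 2
      rw [mul_pow, Real.sq_sqrt (by positivity)] at h1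
      nlinarith
    have hp1 : 0 < hf (n+1) x := lt_of_lt_of_le (by positivity) ih1
    refine ⟨?_, hp1⟩
    rw [hf_succ_succ]
    have key := mul_le_mul_of_nonneg_left ih1 (le_of_lt (by positivity : (0:ℝ) < x/2))
    push_cast
    nlinarith [mul_pos ih2 hx0]

lemma hf_root_bound (n : ℕ) (x : ℝ) (hx : hf (n+1) x = 0) : |x| ≤ 2 * Real.sqrt (n+1) := by
  by_contra h
  push_neg at h
  have habs : ∀ y : ℝ, 2 * Real.sqrt (n+1) ≤ y → hf (n+1) y ≠ 0 := by
    intro y hy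
    obtain ⟨h1, h2⟩ := hf_pos n y hy
    have hy0 : 0 < y := by
      nlinarith [Real.sq_sqrt (show (0:ℝ) ≤ (n:ℝ)+1 by positivity),
        Real.sqrt_nonneg ((n:ℝ)+1)]
    nlinarith
  rcases le_total 0 x with h0 | h0
  · exact habs x (by rw [abs_of_nonneg h0] at h; linarith) hx
  · have : hf (n+1) (-x) = 0 := by rw [hf_parity, hx, mul_zero]
    exact habs (-x) (by rw [abs_of_nonpos h0] at h; linarith) this

lemma hf_cd (n : ℕ) (x : ℝ) :
    (n.factorial : ℝ) ≤ ((n:ℝ)+1) * hf n x^2 - (n:ℝ) * hf (n-1) x * hf (n+1) x := by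
  induction n with
  | zero => simp [hf_zero]
  | succ n ih =>
    have key : ((n:ℝ)+2) * hf (n+1) x^2 - ((n:ℝ)+1) * hf n x * hf (n+2) x
        = ((n:ℝ)+1) * (((n:ℝ)+1) * hf n x^2 - (n:ℝ) * hf (n-1) x * hf (n+1) x)
          + hf (n+1) x^2 := by
      match n with
      | 0 => norm_num [hf_succ_succ, hf_zero, hf_one]; ring
      | (m+1) =>
        have e1 := hf_succ_succ (m+1) x
        have e2 := hf_succ_succ m x
        simp only [Nat.add_sub_cancel]
        push_cast at e1 e2 ⊢
        linear_combination (-((m:ℝ)+2) * hf (m+1) x) * e1 + (((m:ℝ)+2) * hf (m+2) x) * e2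
    have hfac : ((n+1).factorial : ℝ) = ((n:ℝ)+1) * n.factorial := by
      rw [Nat.factorial_succ]; push_cast; ring
    simp only [Nat.add_sub_cancel]
    push_cast at key ih ⊢
    nlinarith [mul_le_mul_of_nonneg_left ih (show (0:ℝ) ≤ (n:ℝ)+1 by positivity),
      sq_nonneg (hf (n+1) x), hfac, key]

lemma hP_ne_zero (n : ℕ) : hP n ≠ 0 :=
  ((hermite_monic n).map (Int.castRingHom ℝ)).ne_zero

lemma hP_natDegree (n : ℕ) : (hP n).natDegree = n := by
  rw [hP, (hermite_monic n).natDegree_map, natDegree_hermite]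

noncomputable def hF (n : ℕ) (x : ℝ) : ℝ := hf n x * Real.exp (-(x^2/2))

lemma hP_deriv_eval (n : ℕ) (x : ℝ) :
    ((hP n).derivative).eval x = x * hf n x - hf (n+1) x := by
  have h := congrArg (fun p => (p.map (Int.castRingHom ℝ)).eval x) (hermite_succ n)
  simp only [Polynomial.map_sub, Polynomial.map_mul, Polynomial.map_X, eval_sub, eval_mul,
    eval_X, hf_eval] at h
  rw [hP, derivative_map]
  linarith [h]

lemma hF_hasDerivAt (n : ℕ) (x : ℝ) : HasDerivAt (hF n) (-(hF (n+1) x)) x := by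
  have h1 : HasDerivAt (fun x : ℝ => -(x^2/2)) (-x) x := by
    simpa using ((hasDerivAt_pow 2 x).div_const 2).fun_neg
  have h2 := (Real.hasDerivAt_exp (-(x^2/2))).comp x h1
  have h3 : HasDerivAt (fun y => (hP n).eval y) ((hP n).derivative.eval x) x :=
    (hP n).hasDerivAt x
  have h4 := h3.mul h2
  have : HasDerivAt (hF n)
      ((hP n).derivative.eval x * Real.exp (-(x^2/2)) +
        (hP n).eval x * (Real.exp (-(x^2/2)) * -x)) x := by
    refine h4.congr_of_eventuallyEq (Filter.Eventually.of_forall fun y => ?_)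
    simp [hF, hf_eval, hP]
  convert this using 1
  rw [hP_deriv_eval, hP, hf_eval, hF]
  ring

lemma hF_tendsto (n : ℕ) : Tendsto (hF n) atTop (𝓝 0) := by
  have h1 : Tendsto (fun x => (hP n).eval x / Real.exp x) atTop (𝓝 0) :=
    (hP n).tendsto_div_exp_atTop
  have h2 : Tendsto (fun x : ℝ => x - x^2/2) atTop atBot := by
    refine tendsto_atBot_mono' atTop ?_ tendsto_neg_atTop_atBot
    filter_upwards [eventually_ge_atTop (4:ℝ)] with x hx
    nlinarith
  have h3 : Tendsto (fun x : ℝ => Real.exp (x - x^2/2)) atTop (𝓝 0) :=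
    Real.tendsto_exp_atBot.comp h2
  have h4 := h1.mul h3
  rw [mul_zero] at h4
  refine h4.congr fun x => ?_
  rw [hF, ← hf_eval, show x - x^2/2 = x + -(x^2/2) by ring, Real.exp_add, hP]
  field_simp [Real.exp_ne_zero]

lemma lemA' (φ ψ : ℝ → ℝ) (hd : ∀ x, HasDerivAt φ (ψ x) x) (a : ℝ)
    (ha : φ a = 0) (hlim : Tendsto φ atTop (𝓝 0)) (hb : 0 < φ (a+1)) :
    ∃ c, a < c ∧ ψ c = 0 := by
  have hcont : Continuous φ := by
    rw [continuous_iff_continuousAt]; exact fun x => (hd x).continuousAt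
  have hev : ∀ᶠ x in atTop, φ x ∈ Set.Ioo (-(φ (a+1))) (φ (a+1)) :=
    hlim (Ioo_mem_nhds (by linarith) hb)
  obtain ⟨M, hM⟩ := eventually_atTop.mp hev
  set N := max M (a+1) + 1 with hN
  have haN : a < N := by
    have := le_max_right M (a+1); simp only [hN]; linarith
  have hbN : a + 1 ≤ N := by
    have := le_max_right M (a+1); simp only [hN]; linarith
  obtain ⟨c, hcmem, hcmax⟩ := isCompact_Icc.exists_isMaxOn (Set.nonempty_Icc.mpr haN.le)
    (hcont.continuousOn (s := Set.Icc a N))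
  have hφc : φ (a+1) ≤ φ c := hcmax (Set.mem_Icc.mpr ⟨by linarith, hbN⟩)
  have hca : a < c := by
    rcases lt_or_eq_of_le hcmem.1 with h | h
    · exact h
    · exfalso; rw [← h, ha] at hφc; linarith
  have hcN : c < N := by
    rcases lt_or_eq_of_le hcmem.2 with h | h
    · exact h
    · exfalso
      have hNM : M ≤ N := by have := le_max_left M (a+1); simp only [hN]; linarith
      have := (hM N hNM).2
      rw [h] at hφc; linarith
  have hloc : IsLocalMax φ c := hcmax.isLocalMax (Icc_mem_nhds hca hcN)
  exact ⟨c, hca, hloc.hasDerivAt_eq_zero (hd c)⟩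

lemma lemA (φ ψ : ℝ → ℝ) (hd : ∀ x, HasDerivAt φ (ψ x) x) (a : ℝ)
    (ha : φ a = 0) (hlim : Tendsto φ atTop (𝓝 0)) (hne : ∀ x, a < x → φ x ≠ 0) :
    ∃ c, a < c ∧ ψ c = 0 := by
  rcases (hne (a+1) (by linarith)).lt_or_gt with h | h
  · obtain ⟨c, hc1, hc2⟩ := lemA' (fun x => -(φ x)) (fun x => -(ψ x))
      (fun x => (hd x).neg) a (by simp [ha]) (by simpa using hlim.neg)
      (by simpa using h)
    exact ⟨c, hc1, by linarith [hc2]⟩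
  · exact lemA' φ ψ hd a ha hlim h


lemma mem_rset (n : ℕ) (x : ℝ) : x ∈ rset n ↔ hf n x = 0 := by
  rw [rset, Multiset.mem_toFinset, mem_roots (hP_ne_zero n), IsRoot, hP, hf_eval]

lemma card_rset_le (n : ℕ) : (rset n).card ≤ n :=
  le_trans (Multiset.toFinset_card_le _)
    (le_trans ((hP n).card_roots') (le_of_eq (hP_natDegree n)))

lemma hF_eq_zero_iff (n : ℕ) (x : ℝ) : hF n x = 0 ↔ hf n x = 0 := by
  rw [hF]; simp [Real.exp_ne_zero]

lemma le_card_rset : ∀ n : ℕ, n ≤ (rset n).card := by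
  intro n
  induction n with
  | zero => exact Nat.zero_le _
  | succ n ih =>
    match n, ih with
    | 0, _ =>
      have h0 : (0:ℝ) ∈ rset 1 := by rw [mem_rset, hf_one]
      calc 1 = ({(0:ℝ)} : Finset ℝ).card := rfl
        _ ≤ (rset 1).card := Finset.card_le_card (by simp [h0])
    | (m+1), ih =>
      set S := rset (m+1) with hSdef
      have hScard : m+1 ≤ S.card := ih
      have hSne : S.Nonempty := Finset.card_pos.mp (by omega)
      have key : ∀ x : ℝ, ∃ c : ℝ,
          x ∈ S → (x < c ∧ hf (m+2) c = 0 ∧ ∀ z ∈ S, x < z → c < z) := by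
        intro x
        by_cases hx : x ∈ S
        · by_cases hgt : (S.filter (x < ·)).Nonempty
          · set x' := (S.filter (x < ·)).min' hgt with hx'def
            have hx'mem := (S.filter (x < ·)).min'_mem hgt
            rw [Finset.mem_filter] at hx'mem
            obtain ⟨c, hc1, hc2⟩ := exists_hasDerivAt_eq_zero (f := hF (m+1))
              (f' := fun y => -(hF (m+2) y)) hx'mem.2
              ((continuous_iff_continuousAt.mpr
                (fun y => (hF_hasDerivAt (m+1) y).continuousAt)).continuousOn)
              (by rw [(hF_eq_zero_iff _ _).mpr ((mem_rset _ _).mp hx),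
                      (hF_eq_zero_iff _ _).mpr ((mem_rset _ _).mp hx'mem.1)])
              (fun y _ => hF_hasDerivAt (m+1) y)
            refine ⟨c, fun _ => ⟨hc1.1, (hF_eq_zero_iff _ _).mp (by linarith), ?_⟩⟩
            intro z hz hxz
            have : x' ≤ z := (S.filter (x < ·)).min'_le z (Finset.mem_filter.mpr ⟨hz, hxz⟩)
            linarith [hc1.2]
          · obtain ⟨c, hc1, hc2⟩ := lemA (hF (m+1)) (fun y => -(hF (m+2) y))
              (fun y => hF_hasDerivAt (m+1) y) x
              ((hF_eq_zero_iff _ _).mpr ((mem_rset _ _).mp hx))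
              (hF_tendsto (m+1))
              (by
                intro y hy hzero
                exact hgt ⟨y, Finset.mem_filter.mpr
                  ⟨(mem_rset _ _).mpr ((hF_eq_zero_iff _ _).mp hzero), hy⟩⟩)
            refine ⟨c, fun _ => ⟨hc1, (hF_eq_zero_iff _ _).mp (by linarith), ?_⟩⟩
            intro z hz hxz
            exact absurd ⟨z, Finset.mem_filter.mpr ⟨hz, hxz⟩⟩ hgt
        · exact ⟨0, fun h => absurd h hx⟩
      choose g hg using key
      have hgmono : ∀ u ∈ S, ∀ v ∈ S, u < v → g u < g v := by
        intro u hu v hv huv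
        exact lt_trans ((hg u hu).2.2 v hv huv) (hg v hv).1
      have hinj : Set.InjOn g S := by
        intro u hu v hv huv
        by_contra hne'
        rcases lt_or_gt_of_ne hne' with h | h
        · linarith [hgmono u hu v hv h]
        · linarith [hgmono v hv u hu h]
      set T := S.image g with hTdef
      have hTcard : T.card = S.card := Finset.card_image_of_injOn hinj
      have hTsub : T ⊆ rset (m+2) := by
        intro y hy
        obtain ⟨x, hx, rfl⟩ := Finset.mem_image.mp hy
        exact (mem_rset _ _).mpr (hg x hx).2.1
      -- leftmost root
      set mn := S.min' hSne with hmndef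
      have hdneg : ∀ y : ℝ, HasDerivAt (fun z => hF (m+1) (-z)) (hF (m+2) (-y)) y := by
        intro y
        have h := (hF_hasDerivAt (m+1) (-y)).comp y (hasDerivAt_neg y)
        rw [show -(hF (m+2) (-y)) * (-1) = hF (m+2) (-y) by ring] at h
        exact h
      obtain ⟨c, hc1, hc2⟩ := lemA (fun y => hF (m+1) (-y))
        (fun y => hF (m+2) (-y)) hdneg
        (-mn)
        (by simp only [neg_neg]; exact (hF_eq_zero_iff _ _).mpr ((mem_rset _ _).mp (S.min'_mem hSne)))
        (by
          have : (fun y => hF (m+1) (-y)) = fun y => (-1:ℝ)^(m+1) * hF (m+1) y := by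
            funext y
            rw [hF, hF, hf_parity, neg_sq]
            ring
          rw [this]
          simpa using (hF_tendsto (m+1)).const_mul ((-1:ℝ)^(m+1)))
        (by
          intro y hy hzero
          have : (-y) ∈ S := (mem_rset _ _).mpr ((hF_eq_zero_iff _ _).mp hzero)
          have := S.min'_le (-y) this
          linarith)
      have hcroot : hf (m+2) (-c) = 0 := (hF_eq_zero_iff _ _).mp hc2
      have hleft : -c < mn := by linarith
      have hnotmem : (-c) ∉ T := by
        intro hmem
        obtain ⟨x, hx, hgx⟩ := Finset.mem_image.mp hmem
        have h1 := (hg x hx).1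
        have h2 := S.min'_le x hx
        linarith [hgx ▸ h1]
      have hsub2 : insert (-c) T ⊆ rset (m+2) := by
        intro y hy
        rcases Finset.mem_insert.mp hy with rfl | hy
        · exact (mem_rset _ _).mpr hcroot
        · exact hTsub hy
      calc m+1+1 ≤ S.card + 1 := by omega
        _ = T.card + 1 := by rw [hTcard]
        _ = (insert (-c) T).card := (Finset.card_insert_of_notMem hnotmem).symm
        _ ≤ (rset (m+2)).card := Finset.card_le_card hsub2

lemma card_rset_eq (n : ℕ) : (rset n).card = n :=
  le_antisymm (card_rset_le n) (le_card_rset n)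

lemma roots_card_eq (n : ℕ) : Multiset.card (hP n).roots = n :=
  le_antisymm (le_of_le_of_eq (hP n).card_roots' (hP_natDegree n))
    (le_trans (le_of_eq (card_rset_eq n).symm) (Multiset.toFinset_card_le _))

lemma roots_nodup (n : ℕ) : (hP n).roots.Nodup := by
  have h := card_rset_eq n
  rw [rset] at h
  rw [← Multiset.toFinset_card_eq_card_iff_nodup, h, roots_card_eq]

lemma rset_val (n : ℕ) : (rset n).val = (hP n).roots := by
  rw [rset, Multiset.toFinset_val, Multiset.dedup_eq_self.mpr (roots_nodup n)]

lemma hP_eq_prod (n : ℕ) : hP n = ∏ y ∈ rset n, (X - C y) := by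
  have hsplits : Splits (hP n) := by
    rw [splits_iff_card_roots, roots_card_eq, hP_natDegree]
  have hmonic : (hP n).Monic := (hermite_monic n).map _
  have h := hsplits.eq_prod_roots_of_monic hmonic
  rw [h, Finset.prod_eq_multiset_prod, rset_val]

lemma denom_prod (n : ℕ) (y₀ : ℝ) (hy₀ : y₀ ∈ rset (n+1)) :
    ∏ y' ∈ (rset (n+1)).erase y₀, (y₀ - y') = ((n:ℝ)+1) * hf n y₀ := by
  have h1 : hP (n+1) = (X - C y₀) * ∏ y' ∈ (rset (n+1)).erase y₀, (X - C y') := by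
    rw [hP_eq_prod (n+1), ← Finset.mul_prod_erase _ _ hy₀]
  have h2 : (hP (n+1)).derivative.eval y₀
      = (∏ y' ∈ (rset (n+1)).erase y₀, (X - C y')).eval y₀ := by
    rw [h1, derivative_mul]
    simp [derivative_X, derivative_C]
  have h3 : (hP (n+1)).derivative.eval y₀ = ((n:ℝ)+1) * hf n y₀ := by
    rw [hP, derivative_map, derivative_hermite_succ]
    simp only [Polynomial.map_mul, eval_mul, map_C, eval_C, hf_eval, eq_intCast, Polynomial.map_intCast, Polynomial.map_add, Polynomial.map_one, eval_intCast, eval_add, eval_one, eval_natCast]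
    push_cast
    ring
  rw [← h3, h2, eval_prod]
  simp [eval_sub, eval_X, eval_C]

lemma pow_self_le_exp_mul_factorial (n : ℕ) :
    (n:ℝ)^n ≤ Real.exp n * n.factorial := by
  induction n with
  | zero => simp
  | succ n ih =>
    have hstep : ((n:ℝ)+1)^n ≤ Real.exp 1 * (n:ℝ)^n := by
      rcases Nat.eq_zero_or_pos n with rfl | hn
      · simpa using Real.exp_one_gt_d9.le.trans' (by norm_num)
      · have hn' : (0:ℝ) < n := by exact_mod_cast hn
        have h1 : ((n:ℝ)+1) ≤ n * Real.exp (1/n) := by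
          have h := Real.add_one_le_exp (1/(n:ℝ))
          have := mul_le_mul_of_nonneg_left h hn'.le
          calc ((n:ℝ)+1) = n * (1/n + 1) := by field_simp; ring
            _ ≤ n * Real.exp (1/n) := this
        have h2 : ((n:ℝ)+1)^n ≤ ((n:ℝ) * Real.exp (1/n))^n :=
          pow_le_pow_left₀ (by positivity) h1 n
        rw [mul_pow, ← Real.exp_nat_mul, show (n:ℝ) * (1/n) = 1 by field_simp] at h2
        linarith [h2]
    have hfac : ((n+1).factorial : ℝ) = ((n:ℝ)+1) * n.factorial := by
      rw [Nat.factorial_succ]; push_cast; ring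
    have hexp : Real.exp ((n:ℝ)+1) = Real.exp 1 * Real.exp n := by
      rw [← Real.exp_add]; ring_nf
    calc ((n+1:ℕ):ℝ)^(n+1) = ((n:ℝ)+1) * ((n:ℝ)+1)^n := by push_cast; ring
      _ ≤ ((n:ℝ)+1) * (Real.exp 1 * (n:ℝ)^n) :=
          mul_le_mul_of_nonneg_left hstep (by positivity)
      _ ≤ ((n:ℝ)+1) * (Real.exp 1 * (Real.exp n * n.factorial)) := by
          have := mul_le_mul_of_nonneg_left ih (Real.exp_pos 1).le
          exact mul_le_mul_of_nonneg_left this (by positivity)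
      _ = Real.exp ((n:ℝ)+1) * (((n:ℝ)+1) * n.factorial) := by rw [hexp]; ring
      _ = Real.exp ((n+1:ℕ):ℝ) * ((n+1).factorial : ℝ) := by rw [hfac]; push_cast; ring_nf

lemma numeric_bound (s : ℕ) (hs : 1 ≤ s) (t : ℝ) (ht : 0 ≤ t) :
    (t + 2*Real.sqrt ((s:ℝ)+1))^s * Real.exp (-t^2/4)
      ≤ Real.exp (4*s) * Real.sqrt (s.factorial) := by
  have hs' : (1:ℝ) ≤ s := by exact_mod_cast hs
  set R := 2*Real.sqrt ((s:ℝ)+1) with hR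
  have hR0 : 0 ≤ R := by positivity
  have hL0 : 0 ≤ (t + R)^s * Real.exp (-t^2/4) := by positivity
  have hR0' : 0 ≤ Real.exp (4*s) * Real.sqrt (s.factorial) := by positivity
  -- compare squares
  have hsq : ((t + R)^s * Real.exp (-t^2/4))^2
      ≤ (Real.exp (4*s) * Real.sqrt (s.factorial))^2 := by
    have hRsq : R^2 = 4*((s:ℝ)+1) := by
      rw [hR, mul_pow, Real.sq_sqrt (by positivity)]; ring
    set a := 2*t^2 + 16*(s:ℝ) with ha
    have h5 : (t + R)^2 ≤ a := by nlinarith [sq_nonneg (t - R)]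
    have h6 : ((t + R)^2)^s ≤ a^s := pow_le_pow_left₀ (sq_nonneg _) h5 s
    have ha0 : 0 < a := by nlinarith [sq_nonneg t]
    have h4s : (0:ℝ) < 4*s := by linarith
    -- a^s ≤ (4s)^s * exp (a/4 - s)
    have hb : a/(4*(s:ℝ)) ≤ Real.exp (a/(4*s) - 1) := by
      linarith [Real.add_one_le_exp (a/(4*(s:ℝ)) - 1)]
    have hp : (a/(4*(s:ℝ)))^s ≤ Real.exp ((s:ℝ) * (a/(4*s) - 1)) := by
      rw [Real.exp_nat_mul]
      exact pow_le_pow_left₀ (by positivity) hb s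
    have harg : (s:ℝ) * (a/(4*s) - 1) = a/4 - s := by field_simp
    rw [harg] at hp
    have ha' : a^s = (a/(4*(s:ℝ)))^s * (4*(s:ℝ))^s := by
      rw [← mul_pow]; congr 1; field_simp
    have h7 : a^s ≤ (4*(s:ℝ))^s * Real.exp (a/4 - s) := by
      rw [ha']
      calc (a/(4*(s:ℝ)))^s * (4*(s:ℝ))^s
          ≤ Real.exp (a/4 - s) * (4*(s:ℝ))^s :=
            mul_le_mul_of_nonneg_right hp (by positivity)
        _ = (4*(s:ℝ))^s * Real.exp (a/4 - s) := by ring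
    -- assemble squared LHS
    have hE2 : Real.exp (-t^2/4)^2 = Real.exp (-t^2/2) := by
      rw [sq, ← Real.exp_add]; congr 1; ring
    have hLsq : ((t + R)^s * Real.exp (-t^2/4))^2
        = ((t + R)^2)^s * Real.exp (-t^2/2) := by
      rw [mul_pow, pow_right_comm, hE2]
    have hRsq2 : (Real.exp (4*s) * Real.sqrt (s.factorial))^2
        = Real.exp (4*s) * Real.exp (4*s) * s.factorial := by
      rw [mul_pow, Real.sq_sqrt (by positivity)]
      ring
    rw [hLsq, hRsq2]
    have hchain1 : ((t + R)^2)^s * Real.exp (-t^2/2) ≤ a^s * Real.exp (-t^2/2) :=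
      mul_le_mul_of_nonneg_right h6 (Real.exp_pos _).le
    have hchain2 : a^s * Real.exp (-t^2/2)
        ≤ (4*(s:ℝ))^s * (Real.exp (a/4 - s) * Real.exp (-t^2/2)) := by
      calc a^s * Real.exp (-t^2/2)
          ≤ ((4*(s:ℝ))^s * Real.exp (a/4 - s)) * Real.exp (-t^2/2) :=
            mul_le_mul_of_nonneg_right h7 (Real.exp_pos _).le
        _ = (4*(s:ℝ))^s * (Real.exp (a/4 - s) * Real.exp (-t^2/2)) := by ring
    have hexps : Real.exp (a/4 - s) * Real.exp (-t^2/2) = Real.exp (3*s) := by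
      rw [← Real.exp_add]; congr 1; rw [ha]; ring
    rw [hexps] at hchain2
    -- (4s)^s * exp(3s) ≤ exp(4s)*exp(4s)*s!
    have h4pow : (4:ℝ)^s ≤ Real.exp (4*(s:ℝ)) := by
      have h4 : (4:ℝ) ≤ Real.exp 4 := by
        have := Real.add_one_le_exp (3:ℝ)
        have h34 : Real.exp 3 ≤ Real.exp 4 := Real.exp_le_exp.mpr (by norm_num)
        linarith
      calc (4:ℝ)^s ≤ (Real.exp 4)^s := pow_le_pow_left₀ (by norm_num) h4 s
        _ = Real.exp (4*(s:ℝ)) := by rw [← Real.exp_nat_mul, mul_comm]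
    have hss := pow_self_le_exp_mul_factorial s
    have hex : Real.exp (s:ℝ) * Real.exp (3*(s:ℝ)) = Real.exp (4*(s:ℝ)) := by
      rw [← Real.exp_add]; congr 1; ring
    have hfinal : (4*(s:ℝ))^s * Real.exp (3*s)
        ≤ Real.exp (4*s) * Real.exp (4*s) * (s.factorial:ℝ) := by
      calc (4*(s:ℝ))^s * Real.exp (3*s)
          = (4:ℝ)^s * ((s:ℝ)^s * Real.exp (3*s)) := by rw [mul_pow]; ring
        _ ≤ (4:ℝ)^s * ((Real.exp s * s.factorial) * Real.exp (3*s)) := by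
            refine mul_le_mul_of_nonneg_left ?_ (by positivity)
            exact mul_le_mul_of_nonneg_right hss (Real.exp_pos _).le
        _ = (4:ℝ)^s * (Real.exp (4*(s:ℝ)) * s.factorial) := by
            rw [← hex]; ring
        _ ≤ Real.exp (4*(s:ℝ)) * (Real.exp (4*(s:ℝ)) * s.factorial) := by
            refine mul_le_mul_of_nonneg_right h4pow (by positivity)
        _ = Real.exp (4*s) * Real.exp (4*s) * (s.factorial:ℝ) := by ring
    linarith [hchain1, hchain2, hfinal]
  calc (t + R)^s * Real.exp (-t^2/4)
      = Real.sqrt (((t + R)^s * Real.exp (-t^2/4))^2) := (Real.sqrt_sq hL0).symm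
    _ ≤ Real.sqrt ((Real.exp (4*s) * Real.sqrt (s.factorial))^2) := Real.sqrt_le_sqrt hsq
    _ = Real.exp (4*s) * Real.sqrt (s.factorial) := Real.sqrt_sq hR0'



/-- The Lagrange basis polynomial (as a function) associated with the root `y₀`
of the probabilist Hermite polynomial `He_{s+1}`:
`L_{s;y₀}(y) = ∏_{y' root of He_{s+1}, y' ≠ y₀} (y - y')/(y₀ - y')`. -/
noncomputable def lagrangeHermite (s : ℕ) (y₀ y : ℝ) : ℝ :=
  ∏ y' ∈ ((((Polynomial.hermite (s + 1)).map (Int.castRingHom ℝ)).roots).toFinset).erase y₀,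
    (y - y') / (y₀ - y')

/-- Lemma A.4, inequality (norm-L_infty): there is `K > 0` such
that for every `s ≥ 1` and every root `y₀` of `He_{s+1}`,
`sup_{y∈ℝ} |L_{s;y₀}(y)| √(g(y)) ≤ e^{Ks}` (stated pointwise in `y`), where
`g(y) = (2π)^{-1/2} e^{-y²/2}`. -/
theorem stmt_10 :
    ∃ K > (0 : ℝ), ∀ s : ℕ, 1 ≤ s →
      ∀ y₀ ∈ (((Polynomial.hermite (s + 1)).map (Int.castRingHom ℝ)).roots).toFinset,
        ∀ y : ℝ,
          |lagrangeHermite s y₀ y| *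
              Real.sqrt ((Real.sqrt (2 * Real.pi))⁻¹ * Real.exp (-y ^ 2 / 2)) ≤
            Real.exp (K * s) := by
  refine ⟨4, by norm_num, fun s hs y₀ hy₀ y => ?_⟩
  have hy₀' : y₀ ∈ rset (s+1) := hy₀
  set E := (rset (s+1)).erase y₀ with hE
  set R := 2*Real.sqrt ((s:ℝ)+1) with hR
  have hR0 : 0 ≤ R := by positivity
  -- cardinality of E
  have hEcard : E.card = s := by
    rw [hE, Finset.card_erase_of_mem hy₀', card_rset_eq]
    omega
  -- denominator
  set D := ∏ y' ∈ E, (y₀ - y') with hD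
  have hDval : D = ((s:ℝ)+1) * hf s y₀ := denom_prod s y₀ hy₀'
  have hroot : hf (s+1) y₀ = 0 := (mem_rset _ _).mp hy₀'
  have hcd := hf_cd s y₀
  have hcd' : (s.factorial : ℝ) ≤ ((s:ℝ)+1) * hf s y₀^2 := by
    rw [hroot] at hcd; linarith [hcd]
  have hfacpos : (0:ℝ) < s.factorial := by exact_mod_cast s.factorial_pos
  have hDsq : (s.factorial : ℝ) ≤ D^2 := by
    rw [hDval]
    have h1 : (1:ℝ) ≤ (s:ℝ)+1 := by
      have : (0:ℝ) ≤ s := Nat.cast_nonneg s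
      linarith
    nlinarith [hcd', sq_nonneg (hf s y₀)]
  have hDpos : 0 < |D| := by
    rw [abs_pos]
    intro h0
    rw [h0] at hDsq
    norm_num at hDsq
    exact s.factorial_ne_zero hDsq
  have hDge : Real.sqrt (s.factorial) ≤ |D| := by
    have := Real.sqrt_le_sqrt hDsq
    rwa [Real.sqrt_sq_eq_abs] at this
  -- numerator bound
  have hNbound : ∏ y' ∈ E, |y - y'| ≤ (|y| + R)^s := by
    rw [← hEcard]
    calc ∏ y' ∈ E, |y - y'| ≤ ∏ y' ∈ E, (|y| + R) := by
          apply Finset.prod_le_prod (fun i _ => abs_nonneg _)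
          intro y' hy'
          have hy'root : hf (s+1) y' = 0 := (mem_rset _ _).mp (Finset.mem_of_mem_erase hy')
          have hb := hf_root_bound s y' hy'root
          calc |y - y'| ≤ |y| + |y'| := abs_sub _ _
            _ ≤ |y| + R := by rw [hR]; push_cast at hb ⊢; linarith
      _ = (|y| + R)^E.card := Finset.prod_const _
  -- weight bound
  have hwt : Real.sqrt ((Real.sqrt (2 * Real.pi))⁻¹ * Real.exp (-y ^ 2 / 2))
      ≤ Real.exp (-y^2/4) := by
    have h2pi : (1:ℝ) ≤ Real.sqrt (2 * Real.pi) := by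
      rw [show (1:ℝ) = Real.sqrt 1 from (Real.sqrt_one).symm]
      apply Real.sqrt_le_sqrt
      nlinarith [Real.pi_gt_three]
    have hinv : (Real.sqrt (2 * Real.pi))⁻¹ ≤ 1 := by
      exact inv_le_one_of_one_le₀ h2pi
    have h1 : (Real.sqrt (2 * Real.pi))⁻¹ * Real.exp (-y ^ 2 / 2)
        ≤ Real.exp (-y ^ 2 / 2) := by
      nlinarith [Real.exp_pos (-y^2/2), inv_nonneg.mpr (Real.sqrt_nonneg (2*Real.pi))]
    calc Real.sqrt ((Real.sqrt (2 * Real.pi))⁻¹ * Real.exp (-y ^ 2 / 2))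
        ≤ Real.sqrt (Real.exp (-y ^ 2 / 2)) := Real.sqrt_le_sqrt h1
      _ = Real.exp (-y^2/4) := by
          rw [← Real.exp_half]
          congr 1
          ring
  -- |L|
  have hLabs : |lagrangeHermite s y₀ y| = (∏ y' ∈ E, |y - y'|) / |D| := by
    rw [lagrangeHermite]
    rw [show ((((Polynomial.hermite (s + 1)).map (Int.castRingHom ℝ)).roots).toFinset).erase y₀ = E from rfl]
    rw [Finset.prod_div_distrib, abs_div, Finset.abs_prod]
  rw [hLabs]
  rw [div_mul_eq_mul_div, div_le_iff₀ hDpos]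
  calc (∏ y' ∈ E, |y - y'|) * Real.sqrt ((Real.sqrt (2 * Real.pi))⁻¹ * Real.exp (-y ^ 2 / 2))
      ≤ (|y| + R)^s * Real.exp (-|y|^2/4) := by
        rw [show -|y|^2 = -y^2 by rw [sq_abs]]
        exact mul_le_mul hNbound hwt (Real.sqrt_nonneg _) (by positivity)
    _ ≤ Real.exp (4*s) * Real.sqrt (s.factorial) := numeric_bound s hs |y| (abs_nonneg y)
    _ ≤ Real.exp (4*s) * |D| := mul_le_mul_of_nonneg_left hDge (Real.exp_pos _).le
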